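/- Let m ∈ ℕ and let Φ : [0,1] → ℝ satisfy the self-similarity relation Φ(x) = ∑_{k=0}^{2^m−1} [Φ((x+k)/2^m) − Φ(k/2^m)] for every x ∈ [0,1]. Then for every x ∈ [0,1], (1/m) · ∑_{i=0}^{m−1} ∑_{k=0}^{2^i−1} [Φ((x+k)/2^i) − Φ(k/2^i)] = (1/(2m)) · ∑_{i=0}^{2m−1} ∑_{k=0}^{2^i−1} [Φ((x+k)/2^i) − Φ(k/2^i)]. (This identity expresses that the solution of the MW-problem built from Φ with parameter m coincides with the one built with parameter 2m, proving MW_m ⊆ MW_{2m}.) -/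

import Mathlib

lemma sum_range_mul_split {M : Type*} [AddCommMonoid M] (a b : ℕ) (f : ℕ → M) :
    ∑ k ∈ Finset.range (a * b), f k
      = ∑ l ∈ Finset.range a, ∑ k ∈ Finset.range b, f (l * b + k) := by
  induction a with
  | zero => simp
  | succ n ih =>
    rw [Nat.succ_mul, Finset.sum_range_add, ih, Finset.sum_range_succ]

/-- If `Φ` satisfies the self-similarity relation
`Φ(x) = ∑_{k=0}^{2^m−1} [Φ((x+k)/2^m) − Φ(k/2^m)]` on `[0,1]`, then the MW-candidate built
from `Φ` with parameter `m` coincides with the one built with parameter `2m`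
(so `MW_m ⊆ MW_{2m}`). -/
theorem stmt_16 (m : ℕ) (hm : 1 ≤ m) (Φ : ℝ → ℝ)
    (hself : ∀ x ∈ Set.Icc (0:ℝ) 1,
      Φ x = ∑ k ∈ Finset.range (2 ^ m), (Φ ((x + k) / 2 ^ m) - Φ (k / 2 ^ m))) :
    ∀ x ∈ Set.Icc (0:ℝ) 1,
      (1 / m : ℝ) * ∑ i ∈ Finset.range m, ∑ k ∈ Finset.range (2 ^ i),
          (Φ ((x + k) / 2 ^ i) - Φ (k / 2 ^ i))
        = (1 / (2 * m) : ℝ) * ∑ i ∈ Finset.range (2 * m), ∑ k ∈ Finset.range (2 ^ i),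
          (Φ ((x + k) / 2 ^ i) - Φ (k / 2 ^ i)) := by
  intro x hx
  obtain ⟨hx0, hx1⟩ := hx
  set S : ℕ → ℝ → ℝ := fun i y => ∑ k ∈ Finset.range (2 ^ i),
    (Φ ((y + k) / 2 ^ i) - Φ (k / 2 ^ i)) with hS
  -- membership lemma
  have hmem : ∀ (i k : ℕ), k < 2 ^ i → (x + k) / 2 ^ i ∈ Set.Icc (0:ℝ) 1 := by
    intro i k hk
    have h2 : (0:ℝ) < 2 ^ i := by positivity
    constructor
    · positivity
    · rw [div_le_one h2]
      have : (k:ℝ) + 1 ≤ (2:ℝ) ^ i := by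
        have := Nat.succ_le_of_lt hk
        exact_mod_cast (by exact_mod_cast this : ((k+1 : ℕ) : ℝ) ≤ ((2^i : ℕ) : ℝ))
      linarith
  have hmem0 : ∀ (i k : ℕ), k < 2 ^ i → (k:ℝ) / 2 ^ i ∈ Set.Icc (0:ℝ) 1 := by
    intro i k hk
    have h := hmem i k hk
    have h2 : (0:ℝ) < 2 ^ i := by positivity
    constructor
    · positivity
    · rw [div_le_one h2]
      have : (k:ℝ) + 1 ≤ (2:ℝ) ^ i := by
        have := Nat.succ_le_of_lt hk
        exact_mod_cast (by exact_mod_cast this : ((k+1 : ℕ) : ℝ) ≤ ((2^i : ℕ) : ℝ))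
      linarith
  -- key periodicity
  have key : ∀ i : ℕ, S (m + i) x = S i x := by
    intro i
    have hpow : (2:ℕ) ^ (m + i) = 2 ^ m * 2 ^ i := pow_add 2 m i
    rw [hS]
    simp only
    rw [show Finset.range (2 ^ (m + i)) = Finset.range (2 ^ m * 2 ^ i) by rw [hpow],
      sum_range_mul_split]
    rw [Finset.sum_comm]
    apply Finset.sum_congr rfl
    intro k hk
    rw [Finset.mem_range] at hk
    have h1 := hself _ (hmem i k hk)
    have h0 := hself _ (hmem0 i k hk)
    have : Φ ((x + k) / 2 ^ i) - Φ (k / 2 ^ i)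
        = ∑ l ∈ Finset.range (2 ^ m),
            (Φ (((x + k) / 2 ^ i + l) / 2 ^ m) - Φ (((k:ℝ) / 2 ^ i + l) / 2 ^ m)) := by
      rw [h1, h0, ← Finset.sum_sub_distrib]
      apply Finset.sum_congr rfl
      intro l _
      ring
    rw [this]
    apply Finset.sum_congr rfl
    intro l _
    have h2i : ((2:ℝ) ^ i) ≠ 0 := by positivity
    have h2m : ((2:ℝ) ^ m) ≠ 0 := by positivity
    have e1 : (x + ↑(l * 2 ^ i + k)) / 2 ^ (m + i) = ((x + k) / 2 ^ i + l) / 2 ^ m := by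
      push_cast
      rw [pow_add]
      field_simp
      ring
    have e2 : (↑(l * 2 ^ i + k) : ℝ) / 2 ^ (m + i) = ((k:ℝ) / 2 ^ i + l) / 2 ^ m := by
      push_cast
      rw [pow_add]
      field_simp
      ring
    rw [e1, e2]
  have hsplit : ∑ i ∈ Finset.range (2 * m), S i x
      = ∑ i ∈ Finset.range m, S i x + ∑ i ∈ Finset.range m, S (m + i) x := by
    rw [two_mul, Finset.sum_range_add]
  have h2T : ∑ i ∈ Finset.range (2 * m), S i x = 2 * ∑ i ∈ Finset.range m, S i x := by
    rw [hsplit]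
    rw [Finset.sum_congr rfl (fun i _ => key i)]
    ring
  have hm' : (m:ℝ) ≠ 0 := Nat.cast_ne_zero.mpr (by omega)
  show (1 / m : ℝ) * ∑ i ∈ Finset.range m, S i x
      = (1 / (2 * m) : ℝ) * ∑ i ∈ Finset.range (2 * m), S i x
  rw [h2T]
  field_simp
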